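/- arXiv:2507.02421 — 3 statements merged into one kernel-verified Lean document; each statement's English description precedes it below -/
import Mathlib

section
/- Let (G, L_G) and (H, L_H) be grafts. If (H, L_H) is a local complementation minor of (G, L_G), i.e. (H, L_H) is obtained from (G, L_G) by a finite sequence of local complementation deletion operations, each performed at a vertex belonging to the current mark set, then the corank over GF(2) of A_{(G,L_G)} equals the corank over GF(2) of A_{(H,L_H)}. -/
open scoped Classical symmDiff

/-- Local complementation of a simple graph at a vertex `v`: toggle the adjacency
between every pair of distinct neighbours of `v`. -/
def SimpleGraph.localComp {V : Type*} (G : SimpleGraph V) (v : V) : SimpleGraph V where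
  Adj u w := u ≠ w ∧ (Xor' (G.Adj u w) (G.Adj v u ∧ G.Adj v w))
  symm := ⟨by
    rintro u w ⟨h1, h2⟩
    refine ⟨h1.symm, ?_⟩
    rw [G.adj_comm w u, and_comm]
    exact h2⟩
  loopless := ⟨fun u h => h.1 rfl⟩

/-- Local complementation deletion `G ⊟ v`, keeping the ambient vertex type
(the deleted vertex becomes isolated). -/
def SimpleGraph.lcdel {V : Type*} (G : SimpleGraph V) (v : V) : SimpleGraph V where
  Adj u w := u ≠ v ∧ w ≠ v ∧ (G.localComp v).Adj u w
  symm := ⟨fun u w h => ⟨h.2.1, h.1, (G.localComp v).adj_symm h.2.2⟩⟩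
  loopless := ⟨fun u h => (G.localComp v).loopless.irrefl u h.2.2⟩

/-- A graft: a simple graph whose edges lie inside a finite support, together with
a marked set of vertices `L ⊆ support`. -/
structure Graft (V : Type*) where
  support : Finset V
  G : SimpleGraph V
  edge_mem : ∀ ⦃u w : V⦄, G.Adj u w → u ∈ support
  L : Finset V
  L_sub : L ⊆ support

variable {V : Type*} [Fintype V] [DecidableEq V]

/-- Local complementation deletion of a graft at a vertex:
`(G, L) ⊟ v = (G ⊟ v, (L \ {v}) ∆ N_G(v))`. -/
noncomputable def Graft.lcd (Γ : Graft V) (v : V) : Graft V where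
  support := Γ.support.erase v
  G := Γ.G.lcdel v
  edge_mem := by
    intro u w h
    obtain ⟨hu, hw, hne, hx⟩ := h
    refine Finset.mem_erase.mpr ⟨hu, ?_⟩
    rcases (hx : (Γ.G.Adj u w ∧ ¬(Γ.G.Adj v u ∧ Γ.G.Adj v w)) ∨
        ((Γ.G.Adj v u ∧ Γ.G.Adj v w) ∧ ¬Γ.G.Adj u w)) with ⟨ha, -⟩ | ⟨⟨hv1, -⟩, -⟩
    · exact Γ.edge_mem ha
    · exact Γ.edge_mem (Γ.G.adj_symm hv1)
  L := (Γ.L.erase v) ∆ (Finset.univ.filter fun u => Γ.G.Adj v u)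
  L_sub := by
    intro u hu
    rw [Finset.mem_symmDiff] at hu
    refine Finset.mem_erase.mpr ?_
    rcases hu with ⟨h1, -⟩ | ⟨h2, -⟩
    · exact ⟨(Finset.mem_erase.mp h1).1, Γ.L_sub (Finset.mem_erase.mp h1).2⟩
    · have hadj : Γ.G.Adj v u := (Finset.mem_filter.mp h2).2
      exact ⟨fun h => Γ.G.loopless.irrefl v (h ▸ hadj), Γ.edge_mem (Γ.G.adj_symm hadj)⟩

/-- `Δ` is a local complementation minor of `Γ`: it is obtained from `Γ` by a
finite sequence of local complementation deletions, each performed at a vertex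
of the current mark set. -/
inductive Graft.IsLCMinor : Graft V → Graft V → Prop
  | refl (Γ : Graft V) : Graft.IsLCMinor Γ Γ
  | step {Γ Δ : Graft V} (v : V) (hv : v ∈ Γ.L) :
      Graft.IsLCMinor (Γ.lcd v) Δ → Graft.IsLCMinor Γ Δ

/-- The adjacency matrix over GF(2) of a graft, indexed by its support. -/
noncomputable def Graft.matrix (Γ : Graft V) :
    Matrix Γ.support Γ.support (ZMod 2) := fun u w =>
  if (u : V) = (w : V) then (if (u : V) ∈ Γ.L then 1 else 0)
  else (if Γ.G.Adj (u : V) (w : V) then 1 else 0)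

/-- The corank over GF(2) of the adjacency matrix of a graft. -/
noncomputable def Graft.corank (Γ : Graft V) : ℕ :=
  Γ.support.card - Γ.matrix.rank

section RankLemmas

open Matrix LinearMap

variable {K : Type*} [Field K]

private lemma range_prodMap' {M N P Q : Type*} [AddCommGroup M] [AddCommGroup N]
    [AddCommGroup P] [AddCommGroup Q] [Module K M] [Module K N] [Module K P] [Module K Q]
    (f : M →ₗ[K] N) (g : P →ₗ[K] Q) :
    LinearMap.range (f.prodMap g) = (LinearMap.range f).prod (LinearMap.range g) := by
  ext ⟨a, b⟩
  constructor
  · rintro ⟨⟨x, y⟩, h⟩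
    rw [LinearMap.prodMap_apply] at h
    exact ⟨⟨x, congrArg Prod.fst h⟩, ⟨y, congrArg Prod.snd h⟩⟩
  · rintro ⟨⟨x, hx⟩, ⟨y, hy⟩⟩
    exact ⟨(x, y), by simp [hx, hy]⟩

private noncomputable def prodSubmoduleEquiv {M N : Type*} [AddCommGroup M] [AddCommGroup N]
    [Module K M] [Module K N] (p : Submodule K M) (q : Submodule K N) :
    (p.prod q) ≃ₗ[K] p × q where
  toFun x := (⟨x.1.1, x.2.1⟩, ⟨x.1.2, x.2.2⟩)
  invFun y := ⟨(y.1.1, y.2.1), ⟨y.1.2, y.2.2⟩⟩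
  left_inv x := rfl
  right_inv y := rfl
  map_add' x y := rfl
  map_smul' c x := rfl

private lemma finrank_prod_submodule {M N : Type*} [AddCommGroup M] [AddCommGroup N]
    [Module K M] [Module K N] [FiniteDimensional K M] [FiniteDimensional K N]
    (p : Submodule K M) (q : Submodule K N) :
    Module.finrank K (p.prod q) = Module.finrank K p + Module.finrank K q := by
  rw [(prodSubmoduleEquiv p q).finrank_eq, Module.finrank_prod]

private lemma rank_fromBlocks_diag {l m n o : Type*} [Fintype l] [Fintype m] [Fintype n]
    [Fintype o] (A : Matrix m l K) (D : Matrix n o K) :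
    (Matrix.fromBlocks A (0 : Matrix m o K) (0 : Matrix n l K) D).rank = A.rank + D.rank := by
  classical
  set e₁ := LinearEquiv.sumArrowLequivProdArrow l o K K
  set e₂ := LinearEquiv.sumArrowLequivProdArrow m n K K
  have h : (Matrix.fromBlocks A (0 : Matrix m o K) (0 : Matrix n l K) D).mulVecLin
      = (e₂.symm.toLinearMap ∘ₗ (A.mulVecLin.prodMap D.mulVecLin)) ∘ₗ e₁.toLinearMap := by
    apply LinearMap.ext
    intro x
    funext i
    cases i with
    | inl i =>
      simp [Matrix.mulVecLin_apply, Matrix.fromBlocks_mulVec, e₁, e₂,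
        LinearEquiv.sumArrowLequivProdArrow, Equiv.sumArrowEquivProdArrow]
    | inr i =>
      simp [Matrix.mulVecLin_apply, Matrix.fromBlocks_mulVec, e₁, e₂,
        LinearEquiv.sumArrowLequivProdArrow, Equiv.sumArrowEquivProdArrow]
  rw [Matrix.rank, h, LinearMap.range_comp_of_range_eq_top _ e₁.range,
    LinearMap.range_comp, range_prodMap']
  rw [LinearEquiv.finrank_map_eq, finrank_prod_submodule]
  rfl

private lemma rank_fromBlocks_one₁₁ {n : Type*} [Fintype n] [DecidableEq n]
    (B : Matrix Unit n K) (C : Matrix n Unit K) (D : Matrix n n K) :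
    (Matrix.fromBlocks (1 : Matrix Unit Unit K) B C D).rank = 1 + (D - C * B).rank := by
  classical
  haveI : Invertible (1 : Matrix Unit Unit K) := invertibleOne
  rw [Matrix.fromBlocks_eq_of_invertible₁₁]
  rw [Matrix.rank_mul_eq_left_of_isUnit_det _ _
    (by simp [Matrix.det_fromBlocks_zero₂₁])]
  rw [Matrix.rank_mul_eq_right_of_isUnit_det _ _
    (by simp [Matrix.det_fromBlocks_zero₁₂])]
  rw [invOf_one, Matrix.mul_one, rank_fromBlocks_diag, Matrix.rank_one,
    Fintype.card_unit]

end RankLemmas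


section KeyLemma

open Matrix

private noncomputable def pivotEquiv (Γ : Graft V) (v : V) (hvS : v ∈ Γ.support) :
    (Unit ⊕ {x : V // x ∈ Γ.support.erase v}) ≃ {x : V // x ∈ Γ.support} where
  toFun := Sum.elim (fun _ => ⟨v, hvS⟩) (fun u => ⟨u.1, Finset.mem_of_mem_erase u.2⟩)
  invFun x := if h : x.1 = v then Sum.inl () else
    Sum.inr ⟨x.1, Finset.mem_erase.mpr ⟨h, x.2⟩⟩
  left_inv i := by
    cases i with
    | inl _ => simp
    | inr u =>
      have : u.1 ≠ v := (Finset.mem_erase.mp u.2).1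
      simp [this]
  right_inv x := by
    by_cases h : x.1 = v
    · simp only [h, dif_pos]
      exact Subtype.ext h.symm
    · simp [h]

private lemma graft_rank_lcd (Γ : Graft V) {v : V} (hv : v ∈ Γ.L) :
    Γ.matrix.rank = (Γ.lcd v).matrix.rank + 1 := by
  classical
  have hvS : v ∈ Γ.support := Γ.L_sub hv
  set e := pivotEquiv Γ v hvS with he
  set B : Matrix Unit {x : V // x ∈ Γ.support.erase v} (ZMod 2) :=
    Matrix.of (fun _ u => if Γ.G.Adj v u.1 then 1 else 0) with hB
  set C : Matrix {x : V // x ∈ Γ.support.erase v} Unit (ZMod 2) :=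
    Matrix.of (fun u _ => if Γ.G.Adj u.1 v then 1 else 0) with hC
  set D : Matrix {x : V // x ∈ Γ.support.erase v} {x : V // x ∈ Γ.support.erase v} (ZMod 2) :=
    Matrix.of (fun u w =>
      if (u.1 : V) = w.1 then (if (u.1 : V) ∈ Γ.L then 1 else 0)
      else (if Γ.G.Adj u.1 w.1 then 1 else 0)) with hD
  have hsub : Γ.matrix.submatrix e e = Matrix.fromBlocks 1 B C D := by
    funext i j
    cases i with
    | inl i =>
      cases j with
      | inl j =>
        simp [Matrix.submatrix_apply, he, pivotEquiv, Graft.matrix, hv, Matrix.one_apply]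
      | inr u =>
        have hne : v ≠ (u.1 : V) := fun h => (Finset.mem_erase.mp u.2).1 h.symm
        simp [Matrix.submatrix_apply, he, pivotEquiv, Graft.matrix, hne, hB]
        exact if_congr Iff.rfl rfl rfl
    | inr u =>
      cases j with
      | inl j =>
        have hne : (u.1 : V) ≠ v := (Finset.mem_erase.mp u.2).1
        simp [Matrix.submatrix_apply, he, pivotEquiv, Graft.matrix, hne, hC]
        exact if_congr Iff.rfl rfl rfl
      | inr w =>
        simp [Matrix.submatrix_apply, he, pivotEquiv, Graft.matrix, hD]
        convert rfl
        all_goals exact if_congr Iff.rfl rfl rfl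
  have hlcd : (Γ.lcd v).matrix = D - C * B := by
    funext u w
    change ↥(Γ.support.erase v) at u w
    have huv : (u.1 : V) ≠ v := (Finset.mem_erase.mp u.2).1
    have hwv : (w.1 : V) ≠ v := (Finset.mem_erase.mp w.2).1
    have hmul : (C * B) u w = (if Γ.G.Adj u.1 v then 1 else 0) *
        (if Γ.G.Adj v w.1 then 1 else 0) := by
      simp [Matrix.mul_apply, hB, hC, Matrix.of_apply]
    have hsub' : (D - C * B) u w = D u w - (C * B) u w := rfl
    have hcomm : Γ.G.Adj u.1 v ↔ Γ.G.Adj v u.1 := Γ.G.adj_comm _ _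
    rw [hsub', hmul]
    by_cases huw : (u.1 : V) = w.1
    · have hLmem : (u.1 : V) ∈ (Γ.lcd v).L ↔
          (((u.1 : V) ∈ Γ.L ∧ ¬ Γ.G.Adj v u.1) ∨ (Γ.G.Adj v u.1 ∧ (u.1 : V) ∉ Γ.L)) := by
        simp [Graft.lcd, Finset.mem_symmDiff, Finset.mem_erase, huv]
      have h1 : (Γ.lcd v).matrix u w = if (u.1 : V) ∈ (Γ.lcd v).L then 1 else 0 := by
        simp [Graft.matrix, huw]
      rw [h1]
      by_cases hL : (u.1 : V) ∈ Γ.L <;> by_cases hA : Γ.G.Adj v u.1 <;>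
        simp [hLmem, hL, hA, hD, ← huw, hcomm, Matrix.of_apply,
          show u = w ↔ True from iff_true_intro (Subtype.ext huw)] <;> decide
    · have hAdj : (Γ.G.lcdel v).Adj u.1 w.1 ↔
          Xor' (Γ.G.Adj u.1 w.1) (Γ.G.Adj v u.1 ∧ Γ.G.Adj v w.1) := by
        simp [SimpleGraph.lcdel, SimpleGraph.localComp, huv, hwv, huw]
      have h1 : (Γ.lcd v).matrix u w = if (Γ.G.lcdel v).Adj u.1 w.1 then 1 else 0 := by
        simp [Graft.matrix, Graft.lcd, huw]
        exact if_congr Iff.rfl rfl rfl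
      rw [h1]
      by_cases h2 : Γ.G.Adj u.1 w.1 <;> by_cases h3 : Γ.G.Adj v u.1 <;>
        by_cases h4 : Γ.G.Adj v w.1 <;>
        simp [hAdj, Xor', h2, h3, h4, hD, huw, hcomm, Matrix.of_apply,
          show u = w ↔ False from iff_false_intro (fun h => huw (congrArg Subtype.val h))] <;> decide
  have hr : Γ.matrix.rank = (Γ.matrix.submatrix e e).rank := (Matrix.rank_submatrix _ e e).symm
  rw [hr, hsub, rank_fromBlocks_one₁₁, hlcd, add_comm]
  rfl

private lemma graft_corank_lcd (Γ : Graft V) {v : V} (hv : v ∈ Γ.L) :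
    Γ.corank = (Γ.lcd v).corank := by
  have hvS : v ∈ Γ.support := Γ.L_sub hv
  have h1 : (Γ.lcd v).support = Γ.support.erase v := rfl
  have h2 : Γ.matrix.rank = (Γ.lcd v).matrix.rank + 1 := graft_rank_lcd Γ hv
  have h3 : (Γ.support.erase v).card = Γ.support.card - 1 := Finset.card_erase_of_mem hvS
  have h4 : 1 ≤ Γ.support.card := Finset.card_pos.mpr ⟨v, hvS⟩
  show Γ.support.card - Γ.matrix.rank = (Γ.support.erase v).card - (Γ.lcd v).matrix.rank
  rw [h3, h2]
  omega

end KeyLemma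

/-- Proposition 3.1: if `(H, L_H)` is a local complementation minor of `(G, L_G)`,
then the coranks over GF(2) of their adjacency matrices coincide. -/
theorem corank_eq_of_isLCMinor {V : Type*} [Fintype V] [DecidableEq V]
    (Γ Δ : Graft V) (h : Γ.IsLCMinor Δ) :
    Γ.corank = Δ.corank := by
  induction h with
  | refl Γ => rfl
  | step v hv _ ih => rw [graft_corank_lcd _ hv]; exact ih
end

section
/- For every path graph P on n ≥ 1 vertices there exists a subset L_P ⊆ V(P) such that the graft (P, L_P) has a local complementation minor (P', L_{P'}) in which P' consists of a single isolated vertex and L_{P'} = ∅. Moreover, for n ≥ 2 one may take L_P = {v_1, v_n}, the set of the two leaves of the path, and obtain this minor by performing local complementation deletions successively at v_1, v_2, …, v_{n−1}. -/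
open scoped Classical symmDiff

variable {V : Type*} [Fintype V] [DecidableEq V]

/-- The graft on the path graph `P_n` (full support) with mark set `L`. -/
noncomputable def pathGraft (n : ℕ) (L : Finset (Fin n)) : Graft (Fin n) :=
  ⟨Finset.univ, SimpleGraph.pathGraph n, fun u _ _ => Finset.mem_univ u, L,
    Finset.subset_univ L⟩

/-- The tail path graph: edges `i ~ i+1` restricted to vertices `≥ k`. -/
def pGraph (n k : ℕ) : SimpleGraph (Fin n) where
  Adj u w := k ≤ u.val ∧ k ≤ w.val ∧ ((u : ℕ) + 1 = w ∨ (w : ℕ) + 1 = u)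
  symm := ⟨fun u w ⟨h1, h2, h3⟩ => ⟨h2, h1, h3.symm⟩⟩
  loopless := ⟨fun u h => by omega⟩

/-- The intermediate graft after `k` local complementation deletions. -/
noncomputable def pg (n k : ℕ) : Graft (Fin n) where
  support := Finset.univ.filter fun i => k ≤ i.val
  G := pGraph n k
  edge_mem := fun u w h => by
    simp only [Finset.mem_filter, Finset.mem_univ, true_and]; exact h.1
  L := Finset.univ.filter fun i => k + 1 < n ∧ (i.val = k ∨ i.val = n - 1)
  L_sub := by
    intro i hi
    simp only [Finset.mem_filter, Finset.mem_univ, true_and] at hi ⊢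
    omega

lemma Graft.ext' {Γ Δ : Graft V} (hs : Γ.support = Δ.support) (hG : Γ.G = Δ.G)
    (hL : Γ.L = Δ.L) : Γ = Δ := by
  cases Γ; cases Δ; simp_all

lemma pg_lcd (n k : ℕ) (h : k + 1 < n) :
    (pg n k).lcd ⟨k, by omega⟩ = pg n (k + 1) := by
  refine Graft.ext' ?_ ?_ ?_
  · ext i
    simp only [pg, Graft.lcd, Finset.mem_erase, Finset.mem_filter, Finset.mem_univ,
      true_and, ne_eq, Fin.ext_iff, Fin.val_mk]
    omega
  · ext u w
    simp only [pg, Graft.lcd, SimpleGraph.lcdel, SimpleGraph.localComp, pGraph, Xor', xor_def,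
      Fin.ext_iff, ne_eq]
    constructor
    · rintro ⟨h1, h2, h3, h4⟩; omega
    · intro hh; omega
  · ext i
    simp only [Graft.lcd, Finset.mem_symmDiff, Finset.mem_filter, Finset.mem_univ, true_and]
    simp only [pg, Graft.lcd, Finset.mem_symmDiff, Finset.mem_erase, Finset.mem_filter,
      Finset.mem_univ, true_and, Fin.ext_iff, pGraph, ne_eq]
    omega

lemma pg_foldl (n : ℕ) : ∀ (m k : ℕ), k + m < n → ∀ (f : Fin m → Fin n),
    (∀ i : Fin m, (f i : ℕ) = k + i) →
    (List.ofFn f).foldl Graft.lcd (pg n k) = pg n (k + m) ∧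
      (pg n k).IsLCMinor ((List.ofFn f).foldl Graft.lcd (pg n k)) := by
  intro m
  induction m with
  | zero =>
    intro k hk f hf
    simp only [List.ofFn_zero, List.foldl_nil, Nat.add_zero]
    exact ⟨trivial, Graft.IsLCMinor.refl _⟩
  | succ m ih =>
    intro k hk f hf
    have hf0 : f 0 = ⟨k, by omega⟩ := by
      apply Fin.ext; simpa using hf 0
    have hstep : (pg n k).lcd (f 0) = pg n (k + 1) := by
      rw [hf0]; exact pg_lcd n k (by omega)
    have hmem : f 0 ∈ (pg n k).L := by
      rw [hf0]
      simp only [pg, Finset.mem_filter, Finset.mem_univ, true_and, Fin.val_mk]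
      exact ⟨by omega, Or.inl trivial⟩
    have hrec := ih (k + 1) (by omega) (fun i => f i.succ)
      (fun i => by
        show (f i.succ : ℕ) = k + 1 + i
        have := hf i.succ; rw [Fin.val_succ] at this; omega)
    rw [List.ofFn_succ, List.foldl_cons, hstep]
    have hres : k + 1 + m = k + (m + 1) := by omega
    rw [hres] at hrec
    obtain ⟨h1, h2⟩ := hrec
    exact ⟨h1, Graft.IsLCMinor.step (f 0) hmem (hstep ▸ h2)⟩

lemma pg_final (n : ℕ) (hn : 1 ≤ n) :
    (pg n (n - 1)).support = {⟨n - 1, (by omega : n - 1 + 0 < n)⟩} ∧ (pg n (n - 1)).L = ∅ ∧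
      (pg n (n - 1)).support.card = 1 ∧ ∀ u w, ¬ (pg n (n - 1)).G.Adj u w := by
  have hs : (pg n (n - 1)).support = {⟨n - 1, by omega⟩} := by
    ext i
    simp only [pg, Finset.mem_filter, Finset.mem_univ, true_and, Finset.mem_singleton,
      Fin.ext_iff]
    omega
  refine ⟨hs, ?_, by rw [hs]; simp, ?_⟩
  · ext i
    simp only [pg, Finset.mem_filter, Finset.mem_univ, true_and, Finset.notMem_empty,
      iff_false]
    omega
  · intro u w hadj
    obtain ⟨h1, h2, h3⟩ := hadj
    have := u.isLt; have := w.isLt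
    omega

lemma pathGraft_eq_pg (n : ℕ) (h2 : 2 ≤ n) :
    pathGraft n {⟨0, (by omega : 0 + 0 < n)⟩, ⟨n - 1, (by omega : n - 1 + 0 < n)⟩} = pg n 0 := by
  refine Graft.ext' ?_ ?_ ?_
  · ext i; simp [pathGraft, pg]
  · ext u w
    show (SimpleGraph.pathGraph n).Adj u w ↔ (pGraph n 0).Adj u w
    rw [SimpleGraph.pathGraph_adj]
    simp only [pGraph, Nat.zero_le, true_and]
  · ext i
    simp only [pathGraft, pg, Finset.mem_insert, Finset.mem_singleton, Finset.mem_filter,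
      Finset.mem_univ, true_and, Fin.ext_iff]
    omega

/-- Lemma 3.2: for every path `P` on `n ≥ 1` vertices there is a mark set `L_P`
such that the graft `(P, L_P)` has a local complementation minor consisting of a
single isolated vertex with empty mark set.  Moreover, for `n ≥ 2` one may take
`L_P = {v₁, vₙ}` (the two leaves) and perform the local complementation deletions
successively at `v₁, v₂, …, v_{n-1}`, ending at the single vertex `vₙ` with empty
mark set. -/
theorem path_graft_isLCMinor_single_vertex (n : ℕ) (hn : 1 ≤ n) :
    (∃ (L : Finset (Fin n)) (Δ : Graft (Fin n)),
      (pathGraft n L).IsLCMinor Δ ∧ Δ.support.card = 1 ∧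
      (∀ u w, ¬ Δ.G.Adj u w) ∧ Δ.L = ∅) ∧
    (∀ _h2 : 2 ≤ n,
      let L : Finset (Fin n) := {⟨0, by omega⟩, ⟨n - 1, by omega⟩}
      let Δ : Graft (Fin n) :=
        (List.ofFn fun i : Fin (n - 1) => Fin.castLE (Nat.sub_le n 1) i).foldl
          Graft.lcd (pathGraft n L)
      (pathGraft n L).IsLCMinor Δ ∧ Δ.support = {⟨n - 1, by omega⟩} ∧
        Δ.L = ∅ ∧ ∀ u w, ¬ Δ.G.Adj u w) := by
  have main : ∀ _h2 : 2 ≤ n,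
      let L : Finset (Fin n) := {⟨0, by omega⟩, ⟨n - 1, by omega⟩}
      let Δ : Graft (Fin n) :=
        (List.ofFn fun i : Fin (n - 1) => Fin.castLE (Nat.sub_le n 1) i).foldl
          Graft.lcd (pathGraft n L)
      (pathGraft n L).IsLCMinor Δ ∧ Δ.support = {⟨n - 1, by omega⟩} ∧
        Δ.L = ∅ ∧ ∀ u w, ¬ Δ.G.Adj u w := by
    intro h2
    intro L Δ
    have hbase : pathGraft n L = pg n 0 := pathGraft_eq_pg n h2
    have hfold := pg_foldl n (n - 1) 0 (by omega)
      (fun i : Fin (n - 1) => Fin.castLE (Nat.sub_le n 1) i) (fun i => by simp)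
    have h0 : 0 + (n - 1) = n - 1 := by omega
    rw [h0] at hfold
    have hΔ : Δ = pg n (n - 1) := by
      show (List.ofFn fun i : Fin (n - 1) => Fin.castLE (Nat.sub_le n 1) i).foldl
        Graft.lcd (pathGraft n L) = pg n (n - 1)
      rw [hbase]; exact hfold.1
    have hminor : (pathGraft n L).IsLCMinor Δ := by
      rw [hbase, hΔ]; exact hΔ ▸ (hbase ▸ hfold.2)
    obtain ⟨hs, hl, _, hadj⟩ := pg_final n (by omega)
    exact ⟨hminor, by rw [hΔ, hs], by rw [hΔ, hl], by rw [hΔ]; exact hadj⟩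
  refine ⟨?_, main⟩
  by_cases h2 : 2 ≤ n
  · obtain ⟨hminor, hs, hl, hadj⟩ := main h2
    refine ⟨{⟨0, by omega⟩, ⟨n - 1, by omega⟩}, _, hminor, ?_, hadj, hl⟩
    rw [hs]; simp
  · have hn1 : n = 1 := by omega
    subst hn1
    refine ⟨∅, pathGraft 1 ∅, Graft.IsLCMinor.refl _, ?_, ?_, rfl⟩
    · simp [pathGraft]
    · intro u w hadj
      rw [show (pathGraft 1 ∅).G = SimpleGraph.pathGraph 1 from rfl,
        SimpleGraph.pathGraph_adj] at hadj
      omega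
end

section
/- Let G be a finite simple graph on at least 2 vertices that is not a path (i.e., G is not isomorphic to the path graph P_n for any n). Then there exists a subset S ⊆ V(G) such that the adjacency matrix A_{(G,S)} of the graft (G, S) has corank at least 2 over GF(2), i.e. rank(A_{(G,S)}) ≤ |V(G)| − 2. -/
open scoped Classical symmDiff

variable {V : Type*} [Fintype V] [DecidableEq V]

section Helpers

variable {W : Type*} [Fintype W] [DecidableEq W]

lemma zmodtwo_cases (z : ZMod 2) : z = 0 ∨ z = 1 := by
  fin_cases z
  · exact Or.inl rfl
  · exact Or.inr rfl

lemma indXor (P Q : Prop) [Decidable (Xor' P Q)] [Decidable P] [Decidable Q] :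
    (if Xor' P Q then (1 : ZMod 2) else 0) =
      (if P then (1 : ZMod 2) else 0) + (if Q then (1 : ZMod 2) else 0) := by
  by_cases hP : P <;> by_cases hQ : Q <;> simp [Xor', hP, hQ] <;> decide

lemma indAnd (P Q : Prop) [Decidable (P ∧ Q)] [Decidable P] [Decidable Q] :
    (if P ∧ Q then (1 : ZMod 2) else 0) =
      (if P then (1 : ZMod 2) else 0) * (if Q then (1 : ZMod 2) else 0) := by
  by_cases hP : P <;> by_cases hQ : Q <;> simp [hP, hQ]

lemma indIff {P Q : Prop} [Decidable P] [Decidable Q] (h : P ↔ Q) :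
    (if P then (1 : ZMod 2) else 0) = (if Q then (1 : ZMod 2) else 0) := by
  by_cases hP : P
  · rw [if_pos hP, if_pos (h.mp hP)]
  · rw [if_neg hP, if_neg (fun c => hP (h.mpr c))]

lemma sum_split (v : W) (f : W → ZMod 2) :
    ∑ u, f u = f v + ∑ u : {u : W // u ≠ v}, f ↑u := by
  classical
  rw [← Finset.add_sum_erase Finset.univ f (Finset.mem_univ v)]
  congr 1
  rw [Finset.sum_subtype (Finset.univ.erase v) (p := fun u => u ≠ v)
    (fun u => by simp) f]

/-- no vertex of a path graph has three distinct neighbours. -/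
lemma path_no_three {m : ℕ} {i a b c : Fin m} (hab : a ≠ b) (hac : a ≠ c) (hbc : b ≠ c)
    (h1 : (SimpleGraph.pathGraph m).Adj i a) (h2 : (SimpleGraph.pathGraph m).Adj i b)
    (h3 : (SimpleGraph.pathGraph m).Adj i c) : False := by
  rw [SimpleGraph.pathGraph_adj] at h1 h2 h3
  have hab' : (a : ℕ) ≠ b := fun h => hab (Fin.ext h)
  have hac' : (a : ℕ) ≠ c := fun h => hac (Fin.ext h)
  have hbc' : (b : ℕ) ≠ c := fun h => hbc (Fin.ext h)
  omega

/-- every vertex of a path graph on at least two vertices has a neighbour. -/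
lemma path_min_deg {m : ℕ} (hm : 2 ≤ m) (i : Fin m) :
    ∃ j, (SimpleGraph.pathGraph m).Adj i j := by
  by_cases h : (i : ℕ) + 1 < m
  · exact ⟨⟨(i : ℕ) + 1, h⟩, by rw [SimpleGraph.pathGraph_adj]; left; rfl⟩
  · have hi : (i : ℕ) = m - 1 := by have := i.isLt; omega
    refine ⟨⟨(i : ℕ) - 1, by omega⟩, ?_⟩
    rw [SimpleGraph.pathGraph_adj]
    right
    have := i.isLt
    simp only []
    omega

/-- a path graph on at least three vertices has two distinct non-adjacent vertices. -/
lemma path_nonadj {m : ℕ} (hm : 3 ≤ m) :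
    ∃ i j : Fin m, i ≠ j ∧ ¬ (SimpleGraph.pathGraph m).Adj i j := by
  refine ⟨⟨0, by omega⟩, ⟨2, by omega⟩, ?_, ?_⟩
  · intro h
    have := congrArg Fin.val h
    simp at this
  · rw [SimpleGraph.pathGraph_adj]
    simp

/-- endpoint parity: a path graph on at least two vertices has a vertex of odd degree. -/
lemma path_endpoint_parity {m : ℕ} (hm : 2 ≤ m) :
    ∃ i : Fin m, ∑ j, (if (SimpleGraph.pathGraph m).Adj i j then (1 : ZMod 2) else 0) = 1 := by
  classical
  refine ⟨⟨0, by omega⟩, ?_⟩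
  rw [Finset.sum_boole]
  have : (Finset.univ.filter fun j => (SimpleGraph.pathGraph m).Adj ⟨0, by omega⟩ j)
      = {⟨1, by omega⟩} := by
    ext j
    simp only [Finset.mem_filter, Finset.mem_univ, true_and, Finset.mem_singleton,
      SimpleGraph.pathGraph_adj]
    constructor
    · rintro (h | h)
      · exact Fin.ext (by simpa using h.symm)
      · simp at h
    · rintro rfl
      left
      rfl
  rw [this]
  simp

lemma iso_parity {A B : Type*} [Fintype A] [Fintype B] {H1 : SimpleGraph A}
    {H2 : SimpleGraph B} (φ : H1 ≃g H2) (x : A) :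
    (∑ u, if H1.Adj x u then (1 : ZMod 2) else 0)
      = ∑ j, if H2.Adj (φ x) j then (1 : ZMod 2) else 0 := by
  classical
  rw [← Equiv.sum_comp φ.toEquiv (fun j => if H2.Adj (φ x) j then (1 : ZMod 2) else 0)]
  refine Finset.sum_congr rfl fun u _ => ?_
  congr 1
  simp only [eq_iff_iff]
  exact (φ.map_adj_iff (v := x) (w := u)).symm

/-- the local complement deletion of `G` at `v`, as a graph on the subtype `{u // u ≠ v}`. -/
def lcg (G : SimpleGraph W) (v : W) : SimpleGraph {u : W // u ≠ v} where
  Adj a b := (a : W) ≠ (b : W) ∧ Xor' (G.Adj a b) (G.Adj v a ∧ G.Adj v b)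
  symm := ⟨by
    rintro a b ⟨h1, h2⟩
    refine ⟨h1.symm, ?_⟩
    rw [G.adj_comm (b : W) (a : W), and_comm]
    exact h2⟩
  loopless := ⟨fun a h => h.1 rfl⟩

lemma lcg_adj (G : SimpleGraph W) (v : W) (a b : {u : W // u ≠ v}) :
    (lcg G v).Adj a b ↔
      (a : W) ≠ (b : W) ∧ Xor' (G.Adj a b) (G.Adj v a ∧ G.Adj v b) := Iff.rfl

end Helpers

section Aux

variable {W : Type*} [Fintype W] [DecidableEq W]

/-- entry function of the adjacency matrix of a graft `(G, S)` over GF(2). -/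
noncomputable def entGS (G : SimpleGraph W) (S : Finset W) (u w : W) : ZMod 2 :=
  if u = w then (if u ∈ S then 1 else 0) else (if G.Adj u w then 1 else 0)

/-- There is a mark set whose graft matrix has two independent kernel vectors,
witnessed concretely. -/
def HasGoodPair (G : SimpleGraph W) : Prop :=
  ∃ (S : Finset W) (x y : W → ZMod 2),
    (∀ v, ∑ u, entGS G S v u * x u = 0) ∧
    (∀ v, ∑ u, entGS G S v u * y u = 0) ∧
    ∃ a b, x a = 1 ∧ y a = 0 ∧ x b = 0 ∧ y b = 1

variable {W : Type u} [Fintype W] [DecidableEq W]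

/-- degree parity. -/
noncomputable def dpar (G : SimpleGraph W) (v : W) : ZMod 2 :=
  ∑ u, if G.Adj v u then 1 else 0

lemma zmod2_add_self (z : ZMod 2) : z + z = 0 := by
  rcases zmodtwo_cases z with rfl | rfl <;> decide

lemma comp_kernel (G : SimpleGraph W) (C : Set W)
    (hC : ∀ ⦃u w⦄, G.Adj u w → (u ∈ C ↔ w ∈ C)) (v : W) :
    ∑ u, entGS G (Finset.univ.filter fun w => dpar G w = 1) v u *
      (if u ∈ C then (1 : ZMod 2) else 0) = 0 := by
  classical
  set S := Finset.univ.filter fun w => dpar G w = 1 with hS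
  rw [sum_split v]
  have hdiag : entGS G S v v = (if dpar G v = 1 then 1 else 0) := by
    simp [entGS, hS]
  have hoffent : ∀ u : {u : W // u ≠ v}, entGS G S v ↑u =
      (if G.Adj v ↑u then 1 else 0) := by
    intro u
    rw [entGS, if_neg (fun h => u.2 h.symm)]
  by_cases hv : v ∈ C
  · have hoff : ∀ u : {u : W // u ≠ v},
        entGS G S v ↑u * (if (↑u : W) ∈ C then (1 : ZMod 2) else 0)
          = (if G.Adj v ↑u then 1 else 0) := by
      intro u
      rw [hoffent u]
      by_cases hadj : G.Adj v ↑u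
      · rw [if_pos hadj, if_pos (((hC hadj).mp hv)), mul_one]
      · rw [if_neg hadj, zero_mul]
    rw [Finset.sum_congr rfl (fun u _ => hoff u)]
    have hsum : ∑ u : {u : W // u ≠ v}, (if G.Adj v ↑u then (1 : ZMod 2) else 0)
        = dpar G v := by
      rw [dpar, sum_split v (fun u => if G.Adj v u then (1 : ZMod 2) else 0)]
      simp [G.irrefl]
    rw [hsum, hdiag, if_pos hv, mul_one]
    rcases zmodtwo_cases (dpar G v) with h0 | h1
    · rw [h0]
      decide
    · rw [h1]
      decide
  · have hoff : ∀ u : {u : W // u ≠ v},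
        entGS G S v ↑u * (if (↑u : W) ∈ C then (1 : ZMod 2) else 0) = 0 := by
      intro u
      rw [hoffent u]
      by_cases hadj : G.Adj v ↑u
      · rw [if_neg (fun hu => hv ((hC hadj).mpr hu)), mul_zero]
      · rw [if_neg hadj, zero_mul]
    rw [Finset.sum_congr rfl (fun u _ => hoff u)]
    rw [hdiag, if_neg hv, mul_zero, Finset.sum_const_zero, add_zero]

lemma disconnected_goodPair (G : SimpleGraph W) (a b : W) (hab : ¬ G.Reachable a b) :
    HasGoodPair G := by
  classical
  set C : Set W := {w | G.Reachable a w} with hCdef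
  have hC : ∀ ⦃u w⦄, G.Adj u w → (u ∈ C ↔ w ∈ C) :=
    fun u w h => ⟨fun h' => h'.trans h.reachable, fun h' => h'.trans h.symm.reachable⟩
  have hC' : ∀ ⦃u w⦄, G.Adj u w → (u ∈ Cᶜ ↔ w ∈ Cᶜ) :=
    fun u w h => not_iff_not.mpr (hC h)
  have h1 := comp_kernel G C hC
  have h2 := comp_kernel G Cᶜ hC'
  have haC : a ∈ C := SimpleGraph.Reachable.refl a
  refine ⟨_, _, _, h1, h2, a, b, ?_, ?_, ?_, ?_⟩
  · exact if_pos haC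
  · exact if_neg (fun h => h haC)
  · exact if_neg hab
  · exact if_pos hab

lemma lift_goodPair (G : SimpleGraph W) (v : W) (h2 : HasGoodPair (lcg G v)) :
    HasGoodPair G := by
  classical
  obtain ⟨S', x', y', hker1, hker2, a', b', hxa, hya, hxb, hyb⟩ := h2
  set bv : W → ZMod 2 := fun u => if G.Adj v u then 1 else 0 with hbv
  set cx : ZMod 2 := ∑ w : {u : W // u ≠ v}, bv ↑w * x' w with hcx
  set cy : ZMod 2 := ∑ w : {u : W // u ≠ v}, bv ↑w * y' w with hcy
  set S : Finset W := Finset.univ.filter (fun u =>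
      if h : u = v then True else Xor' ((⟨u, h⟩ : {u : W // u ≠ v}) ∈ S') (G.Adj v u))
    with hSdef
  set x : W → ZMod 2 := fun u => if h : u = v then cx else x' ⟨u, h⟩ with hxdef
  set y : W → ZMod 2 := fun u => if h : u = v then cy else y' ⟨u, h⟩ with hydef
  have hxcoe : ∀ w : {u : W // u ≠ v}, x ↑w = x' w := fun w => dif_neg w.2
  have hycoe : ∀ w : {u : W // u ≠ v}, y ↑w = y' w := fun w => dif_neg w.2
  have hmemS : ∀ (u : W) (h : u ≠ v),
      ((u ∈ S) ↔ Xor' ((⟨u, h⟩ : {u : W // u ≠ v}) ∈ S') (G.Adj v u)) := by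
    intro u h
    rw [hSdef, Finset.mem_filter]
    simp only [Finset.mem_univ, true_and]
    rw [dif_neg h]
  have hvS : v ∈ S := by
    rw [hSdef, Finset.mem_filter]
    simp
  have hentv : ∀ u : {u : W // u ≠ v}, entGS G S (↑u) v = bv ↑u := by
    intro u
    rw [entGS, if_neg u.2, hbv]
    simp only []
    congr 1
    simp only [eq_iff_iff]
    exact G.adj_comm _ _
  have hentv' : ∀ u : {u : W // u ≠ v}, entGS G S v ↑u = bv ↑u := by
    intro u
    rw [entGS, if_neg (fun h => u.2 h.symm)]
  have hrel : ∀ u w : {u : W // u ≠ v},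
      entGS (lcg G v) S' u w = entGS G S ↑u ↑w + bv ↑u * bv ↑w := by
    intro u w
    by_cases huw : u = w
    · subst huw
      rw [entGS, entGS, if_pos rfl, if_pos rfl, hbv]
      simp only []
      have hSiff := hmemS (↑u) u.2
      by_cases hq : G.Adj v ↑u <;> by_cases hs : u ∈ S'
      · have hnotS : ¬ ((↑u : W) ∈ S) := fun c =>
          ((hSiff.mp c).elim (fun pr => pr.2 hq) (fun pr => pr.2 hs))
        rw [if_pos hs, if_neg hnotS, if_pos hq]
        decide
      · have hS2 : (↑u : W) ∈ S := hSiff.mpr (Or.inr ⟨hq, hs⟩)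
        rw [if_neg hs, if_pos hS2, if_pos hq]
        decide
      · have hS2 : (↑u : W) ∈ S := hSiff.mpr (Or.inl ⟨hs, hq⟩)
        rw [if_pos hs, if_pos hS2, if_neg hq]
        decide
      · have hnotS : ¬ ((↑u : W) ∈ S) := fun c =>
          ((hSiff.mp c).elim (fun pr => hs pr.1) (fun pr => hq pr.1))
        rw [if_neg hs, if_neg hnotS, if_neg hq]
        decide
    · have hne : (↑u : W) ≠ ↑w := fun h => huw (Subtype.ext h)
      rw [entGS, entGS, if_neg huw, if_neg hne, hbv]
      simp only []
      have hLCG : (lcg G v).Adj u w ↔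
          Xor' (G.Adj ↑u ↑w) (G.Adj v ↑u ∧ G.Adj v ↑w) := by
        rw [lcg_adj]
        exact and_iff_right hne
      rw [indIff hLCG, indXor, indAnd]
  have hkernel : ∀ (z : W → ZMod 2) (z' : {u : W // u ≠ v} → ZMod 2)
      (_ : ∀ w : {u : W // u ≠ v}, z ↑w = z' w)
      (_ : z v = ∑ w : {u : W // u ≠ v}, bv ↑w * z' w)
      (_ : ∀ t', ∑ w : {u : W // u ≠ v}, entGS (lcg G v) S' t' w * z' w = 0),
      ∀ t, ∑ u, entGS G S t u * z u = 0 := by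
    intro z z' hz hzv hk t
    by_cases ht : t = v
    · rw [ht, sum_split v (fun u => entGS G S v u * z u)]
      have hd : entGS G S v v = 1 := by
        rw [entGS, if_pos rfl, if_pos hvS]
      rw [hd, one_mul, hzv]
      have hsum2 : (∑ u : {u : W // u ≠ v}, entGS G S v ↑u * z ↑u)
          = ∑ u : {u : W // u ≠ v}, bv ↑u * z' u :=
        Finset.sum_congr rfl (fun u _ => by rw [hentv' u, hz u])
      rw [hsum2]
      exact zmod2_add_self _
    · rw [sum_split v (fun u => entGS G S t u * z u)]
      set t' : {u : W // u ≠ v} := ⟨t, ht⟩ with ht'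
      have h0 := hk t'
      have hsum3 : (∑ w : {u : W // u ≠ v}, entGS (lcg G v) S' t' w * z' w)
          = ∑ w : {u : W // u ≠ v}, (entGS G S ↑t' ↑w + bv ↑t' * bv ↑w) * z' w :=
        Finset.sum_congr rfl (fun w _ => by rw [hrel t' w])
      rw [hsum3] at h0
      simp only [add_mul, mul_assoc] at h0
      rw [Finset.sum_add_distrib, ← Finset.mul_sum] at h0
      have hgoal : entGS G S t v * z v +
          (∑ u : {u : W // u ≠ v}, entGS G S t ↑u * z ↑u)
          = (∑ w : {u : W // u ≠ v}, entGS G S (↑t') ↑w * z' w)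
            + bv ↑t' * ∑ w : {u : W // u ≠ v}, bv ↑w * z' w := by
        rw [hzv]
        have hsum4 : (∑ u : {u : W // u ≠ v}, entGS G S t ↑u * z ↑u)
            = ∑ w : {u : W // u ≠ v}, entGS G S ↑t' ↑w * z' w :=
          Finset.sum_congr rfl (fun w _ => by rw [hz w])
        rw [hsum4]
        have he : entGS G S t v = bv ↑t' := hentv t'
        rw [he]
        ring
      rw [hgoal, h0]
  refine ⟨S, x, y, hkernel x x' hxcoe (dif_pos rfl) hker1,
    hkernel y y' hycoe (dif_pos rfl) hker2, ↑a', ↑b', ?_, ?_, ?_, ?_⟩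
  · rw [hxcoe a', hxa]
  · rw [hycoe a', hya]
  · rw [hxcoe b', hxb]
  · rw [hycoe b', hyb]

lemma zmod2_eq_of_add_eq_zero {a b : ZMod 2} (h : a + b = 0) : a = b := by
  rcases zmodtwo_cases a with rfl | rfl <;> rcases zmodtwo_cases b with rfl | rfl <;>
    revert h <;> decide

lemma three_le_card {a b c : W} (h1 : a ≠ b) (h2 : a ≠ c) (h3 : b ≠ c) :
    3 ≤ Fintype.card W := by
  classical
  have hsub := Finset.card_le_card (Finset.subset_univ ({a, b, c} : Finset W))
  rw [Finset.card_univ] at hsub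
  have hc : ({a, b, c} : Finset W).card = 3 := by
    rw [Finset.card_insert_of_notMem (by simp [h1, h2]),
      Finset.card_insert_of_notMem (by simp [h3]), Finset.card_singleton]
  omega

lemma exists_adj_of_connected (G : SimpleGraph W) (hconn : G.Connected)
    (h2 : 2 ≤ Fintype.card W) (x : W) : ∃ y, G.Adj x y := by
  obtain ⟨y, hy⟩ := Fintype.exists_ne_of_one_lt_card (by omega) x
  obtain ⟨w⟩ := hconn.preconnected x y
  cases w with
  | nil => exact absurd rfl hy
  | cons h _ => exact ⟨_, h⟩

lemma conn_card2_path (G : SimpleGraph W) (hconn : G.Connected)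
    (h2 : Fintype.card W = 2) : ∃ m, Nonempty (G ≃g SimpleGraph.pathGraph m) := by
  classical
  obtain ⟨a, b, hab⟩ := Fintype.exists_pair_of_one_lt_card (α := W) (by omega)
  have hall : ∀ c : W, c = a ∨ c = b := by
    intro c
    by_contra hc
    push_neg at hc
    have := three_le_card hc.1 hc.2 hab
    omega
  have hadj : G.Adj a b := by
    obtain ⟨w⟩ := hconn.preconnected a b
    cases w with
    | nil => exact absurd rfl hab
    | @cons _ s _ h p =>
      rcases hall s with rfl | rfl
      · exact absurd rfl (G.ne_of_adj h)
      · exact h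
  refine ⟨2, ⟨⟨⟨fun x => if x = a then 0 else 1, fun j => if j = 0 then a else b,
    ?_, ?_⟩, ?_⟩⟩⟩
  · intro x
    rcases hall x with rfl | rfl
    · simp
    · simp [Ne.symm hab]
  · intro j
    fin_cases j
    · simp
    · simp [Ne.symm hab]
  · intro s t
    rcases hall s with hs | hs <;> rcases hall t with ht | ht <;> rw [hs, ht] <;>
      simp only [Equiv.coe_fn_mk, if_pos rfl, if_neg (Ne.symm hab)]
    · simp only [SimpleGraph.pathGraph_adj]
      simp [G.loopless.irrefl a]
    · simp only [SimpleGraph.pathGraph_adj]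
      simp [hadj]
    · simp only [SimpleGraph.pathGraph_adj]
      simp [G.adj_symm hadj]
    · simp only [SimpleGraph.pathGraph_adj]
      simp [G.loopless.irrefl b]
lemma fin_rev_adj {m : ℕ} (a b : Fin m) :
    (SimpleGraph.pathGraph m).Adj a.rev b.rev ↔ (SimpleGraph.pathGraph m).Adj a b := by
  rw [SimpleGraph.pathGraph_adj, SimpleGraph.pathGraph_adj, Fin.val_rev, Fin.val_rev]
  have := a.isLt
  have := b.isLt
  omega

/-- the reversal automorphism of a path graph. -/
def pathRevIso (m : ℕ) : SimpleGraph.pathGraph m ≃g SimpleGraph.pathGraph m :=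
  ⟨Fin.revPerm, by intro a b; exact fin_rev_adj a b⟩

lemma star_card3_path (G : SimpleGraph W) (h3 : Fintype.card W = 3) (h0 : W)
    (huniv : ∀ z, z ≠ h0 → G.Adj h0 z)
    (hno : ∀ a b, a ≠ h0 → b ≠ h0 → ¬ G.Adj a b) :
    ∃ m, Nonempty (G ≃g SimpleGraph.pathGraph m) := by
  classical
  obtain ⟨a, ha⟩ := Fintype.exists_ne_of_one_lt_card (by omega) h0
  obtain ⟨b, hb1, hb2⟩ : ∃ b, b ≠ h0 ∧ b ≠ a := by
    by_contra hc
    push_neg at hc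
    have hcard : (Finset.univ : Finset W) ⊆ {h0, a} := by
      intro c _
      by_cases h : c = h0
      · simp [h]
      · simp [hc c h]
    have := Finset.card_le_card hcard
    rw [Finset.card_univ, h3] at this
    have : ({h0, a} : Finset W).card ≤ 2 := Finset.card_insert_le _ _ |>.trans (by simp)
    omega
  have hall : ∀ c : W, c = a ∨ c = h0 ∨ c = b := by
    intro c
    by_contra hc
    push_neg at hc
    have h4 : ({c, a, h0, b} : Finset W).card = 4 := by
      rw [Finset.card_insert_of_notMem (by simp [hc.1, hc.2.1, hc.2.2]),
        Finset.card_insert_of_notMem (by simp [ha, Ne.symm hb2]),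
        Finset.card_insert_of_notMem (by simp [Ne.symm hb1]), Finset.card_singleton]
    have := Finset.card_le_card (Finset.subset_univ ({c, a, h0, b} : Finset W))
    rw [Finset.card_univ, h3] at this
    omega
  have hchar : ∀ s t : W, G.Adj s t ↔ ((s = h0 ∧ t ≠ h0) ∨ (t = h0 ∧ s ≠ h0)) := by
    intro s t
    constructor
    · intro h
      by_cases hs : s = h0
      · exact Or.inl ⟨hs, fun ht => G.ne_of_adj h (by rw [hs, ht])⟩
      · by_cases ht : t = h0
        · exact Or.inr ⟨ht, hs⟩
        · exact absurd h (hno s t hs ht)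
    · rintro (⟨rfl, ht⟩ | ⟨rfl, hs⟩)
      · exact huniv t ht
      · exact G.adj_symm (huniv s hs)
  refine ⟨3, ⟨⟨⟨fun x => if x = a then 0 else if x = h0 then 1 else 2,
    fun j => if j = 0 then a else if j = 1 then h0 else b, ?_, ?_⟩, ?_⟩⟩⟩
  · intro x
    rcases hall x with rfl | rfl | rfl
    · simp
    · simp [Ne.symm ha]
    · simp [hb2, hb1]
  · intro j
    fin_cases j
    · simp
    · simp [Ne.symm ha]
    · simp [hb2, hb1]
  · intro s t
    rcases hall s with hs | hs | hs <;> rcases hall t with ht | ht | ht <;>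
      rw [hs, ht, hchar] <;>
      simp only [Equiv.coe_fn_mk, if_pos rfl, if_neg (Ne.symm ha), if_neg hb2,
        if_neg hb1] <;>
      simp [SimpleGraph.pathGraph_adj, ha, hb1, Ne.symm ha, Ne.symm hb1] <;>
      decide

lemma lcg_parity_zero (G : SimpleGraph W) (hd : ∀ t, dpar G t = 0) (v : W)
    (x : {z : W // z ≠ v}) :
    (∑ u : {z : W // z ≠ v}, if (lcg G v).Adj x u then (1 : ZMod 2) else 0) = 0 := by
  classical
  set bx : ZMod 2 := if G.Adj v ↑x then 1 else 0 with hbx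
  have hterm : ∀ u : {z : W // z ≠ v},
      (if (lcg G v).Adj x u then (1 : ZMod 2) else 0)
        = ((if G.Adj ↑x ↑u then (1 : ZMod 2) else 0)
            + bx * (if G.Adj v ↑u then 1 else 0))
          + (if u = x then bx else 0) := by
    intro u
    by_cases hux : u = x
    · rw [hux, if_pos rfl, if_neg ((lcg G v).loopless.irrefl x), if_neg (G.loopless.irrefl ↑x)]
      rcases zmodtwo_cases bx with h | h <;> rw [← hbx, h] <;> decide
    · rw [if_neg hux, add_zero]
      have hne : (↑x : W) ≠ ↑u := fun h => hux (Subtype.ext h.symm)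
      have hiff : (lcg G v).Adj x u ↔ Xor' (G.Adj ↑x ↑u) (G.Adj v ↑x ∧ G.Adj v ↑u) := by
        rw [lcg_adj]
        exact and_iff_right hne
      rw [indIff hiff, indXor, indAnd, hbx]
  have hsum : (∑ u : {z : W // z ≠ v}, if (lcg G v).Adj x u then (1 : ZMod 2) else 0)
      = (∑ u : {z : W // z ≠ v}, ((if G.Adj ↑x ↑u then (1 : ZMod 2) else 0)
          + bx * (if G.Adj v ↑u then 1 else 0)))
        + ∑ u : {z : W // z ≠ v}, (if u = x then bx else 0) := by
    rw [← Finset.sum_add_distrib]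
    exact Finset.sum_congr rfl (fun u _ => hterm u)
  rw [hsum, Finset.sum_add_distrib, ← Finset.mul_sum]
  rw [Finset.sum_ite_eq' Finset.univ x (fun _ => bx)]
  have hS1 : (∑ u : {z : W // z ≠ v}, if G.Adj ↑x ↑u then (1 : ZMod 2) else 0)
      = if G.Adj ↑x v then 1 else 0 := by
    have h := sum_split v (fun t => if G.Adj ↑x t then (1 : ZMod 2) else 0)
    have h0 := hd ↑x
    simp only [dpar] at h0
    rw [h0] at h
    exact (zmod2_eq_of_add_eq_zero h.symm).symm
  have hS2 : (∑ u : {z : W // z ≠ v}, if G.Adj v ↑u then (1 : ZMod 2) else 0) = 0 := by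
    have h := sum_split v (fun t => if G.Adj v t then (1 : ZMod 2) else 0)
    have h0 := hd v
    simp only [dpar] at h0
    rw [h0, if_neg (G.loopless.irrefl v), zero_add] at h
    exact h.symm
  rw [hS1, hS2, mul_zero, add_zero, if_pos (Finset.mem_univ x)]
  rw [hbx]
  have hcomm : (if G.Adj ↑x v then (1 : ZMod 2) else 0)
      = (if G.Adj v ↑x then 1 else 0) := indIff (G.adj_comm _ _)
  rw [hcomm]
  exact zmod2_add_self _

lemma leaf_extend (G : SimpleGraph W) (u w : W) (huw : G.Adj u w)
    (hleaf : ∀ z, G.Adj u z → z = w)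
    (hwdeg : ∀ a b c, G.Adj w a → G.Adj w b → G.Adj w c → a = b ∨ a = c ∨ b = c)
    (m : ℕ) (hm : 2 ≤ m) (φ : lcg G u ≃g SimpleGraph.pathGraph m) :
    ∃ k, Nonempty (G ≃g SimpleGraph.pathGraph k) := by
  classical
  have hadjres : ∀ a b : {z : W // z ≠ u}, (lcg G u).Adj a b ↔ G.Adj ↑a ↑b := by
    intro a b
    rw [lcg_adj]
    constructor
    · rintro ⟨hne, hx⟩
      rcases hx with ⟨h, -⟩ | ⟨⟨h1, h2⟩, -⟩
      · exact h
      · exact absurd (by rw [hleaf ↑a h1, hleaf ↑b h2] : (↑a : W) = ↑b) hne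
    · intro h
      refine ⟨G.ne_of_adj h, Or.inl ⟨h, ?_⟩⟩
      rintro ⟨h1, h2⟩
      rw [hleaf ↑a h1, hleaf ↑b h2] at h
      exact G.loopless.irrefl w h
  have hwu : w ≠ u := fun h => G.loopless.irrefl u (h ▸ huw)
  set w' : {z : W // z ≠ u} := ⟨w, hwu⟩ with hw'
  have hend : (φ w' : Fin m).val = 0 ∨ (φ w' : Fin m).val = m - 1 := by
    by_contra hcon
    push_neg at hcon
    obtain ⟨h1, h2⟩ := hcon
    have hlt := (φ w').isLt
    set j1 : Fin m := ⟨(φ w' : Fin m).val - 1, by omega⟩ with hj1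
    set j2 : Fin m := ⟨(φ w' : Fin m).val + 1, by omega⟩ with hj2
    have hadj1 : (SimpleGraph.pathGraph m).Adj (φ w') j1 := by
      rw [SimpleGraph.pathGraph_adj, hj1]
      right
      simp only []
      omega
    have hadj2 : (SimpleGraph.pathGraph m).Adj (φ w') j2 := by
      rw [SimpleGraph.pathGraph_adj, hj2]
      left
      simp only []
    rw [← φ.apply_symm_apply j1] at hadj1
    rw [← φ.apply_symm_apply j2] at hadj2
    have ha : G.Adj w ↑(φ.symm j1) := (hadjres _ _).mp (φ.map_adj_iff.mp hadj1)
    have hb : G.Adj w ↑(φ.symm j2) := (hadjres _ _).mp (φ.map_adj_iff.mp hadj2)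
    have hu : G.Adj w u := G.adj_symm huw
    rcases hwdeg u ↑(φ.symm j1) ↑(φ.symm j2) hu ha hb with h | h | h
    · exact (φ.symm j1).2 h.symm
    · exact (φ.symm j2).2 h.symm
    · have : φ.symm j1 = φ.symm j2 := Subtype.ext h
      have : j1 = j2 := φ.symm.toEquiv.injective this
      have := congrArg Fin.val this
      rw [hj1, hj2] at this
      simp only [] at this
      omega
  obtain ⟨ψ, hψ⟩ : ∃ ψ : lcg G u ≃g SimpleGraph.pathGraph m, (ψ w' : Fin m).val = 0 := by
    rcases hend with h | h
    · exact ⟨φ, h⟩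
    · refine ⟨φ.trans (pathRevIso m), ?_⟩
      have : ((φ.trans (pathRevIso m)) w' : Fin m) = (φ w' : Fin m).rev := rfl
      rw [this, Fin.val_rev, h]
      omega
  have hkey : ∀ (t : W) (ht : t ≠ u),
      ((SimpleGraph.pathGraph (m + 1)).Adj 0 (ψ ⟨t, ht⟩).succ ↔ G.Adj u t) := by
    intro t ht
    rw [SimpleGraph.pathGraph_adj]
    simp only [Fin.val_succ, Fin.val_zero]
    constructor
    · rintro (h | h)
      · have hv : (ψ ⟨t, ht⟩ : Fin m).val = 0 := by omega
        have heq : ψ ⟨t, ht⟩ = ψ w' := Fin.ext (by rw [hv, hψ])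
        have heq2 : (⟨t, ht⟩ : {z : W // z ≠ u}) = w' := ψ.toEquiv.injective heq
        have ht' : t = w := congrArg Subtype.val heq2
        rw [ht']
        exact huw
      · omega
    · intro h
      left
      have ht' : (⟨t, ht⟩ : {z : W // z ≠ u}) = w' := Subtype.ext (hleaf t h)
      rw [ht', hψ]
  refine ⟨m + 1, ⟨⟨⟨fun x => if hx : x = u then 0 else (ψ ⟨x, hx⟩).succ,
    fun j => if hj : j = 0 then u else ↑(ψ.symm (j.pred hj)), ?_, ?_⟩, ?_⟩⟩⟩
  · intro x
    dsimp only
    by_cases hx : x = u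
    · rw [dif_pos hx, dif_pos rfl, hx]
    · rw [dif_neg hx, dif_neg (Fin.succ_ne_zero _)]
      simp only [Fin.pred_succ]
      rw [ψ.symm_apply_apply]
  · intro j
    dsimp only
    by_cases hj : j = 0
    · rw [dif_pos hj, dif_pos rfl, hj]
    · rw [dif_neg hj, dif_neg (ψ.symm (j.pred hj)).2]
      have : (⟨↑(ψ.symm (j.pred hj)), (ψ.symm (j.pred hj)).2⟩ : {z : W // z ≠ u})
          = ψ.symm (j.pred hj) := Subtype.coe_eta _ _
      rw [this, ψ.apply_symm_apply, Fin.succ_pred]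
  · intro s t
    simp only [RelIso.coe_fn_mk, Equiv.coe_fn_mk]
    by_cases hs : s = u <;> by_cases ht : t = u
    · rw [hs, ht, dif_pos rfl]
      constructor
      · intro h
        rw [SimpleGraph.pathGraph_adj] at h
        simp at h
      · intro h
        exact absurd h (G.loopless.irrefl u)
    · rw [hs, dif_pos rfl, dif_neg ht]
      exact hkey t ht
    · rw [ht, dif_pos rfl, dif_neg hs]
      constructor
      · intro h
        exact G.adj_symm ((hkey s hs).mp h.symm)
      · intro h
        exact ((hkey s hs).mpr (G.adj_symm h)).symm
    · rw [dif_neg hs, dif_neg ht]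
      have hsucc : (SimpleGraph.pathGraph (m + 1)).Adj (ψ ⟨s, hs⟩).succ (ψ ⟨t, ht⟩).succ
          ↔ (SimpleGraph.pathGraph m).Adj (ψ ⟨s, hs⟩) (ψ ⟨t, ht⟩) := by
        rw [SimpleGraph.pathGraph_adj, SimpleGraph.pathGraph_adj]
        simp only [Fin.val_succ]
        omega
      rw [hsucc, ψ.map_adj_iff, hadjres]

lemma allpaths_path (G : SimpleGraph W) (hconn : G.Connected) (h3 : 3 ≤ Fintype.card W)
    (hall : ∀ v : W, ∃ m, Nonempty ((lcg G v) ≃g SimpleGraph.pathGraph m)) :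
    ∃ m, Nonempty (G ≃g SimpleGraph.pathGraph m) := by
  classical
  set n := Fintype.card W with hn
  have hcard' : ∀ v : W, Fintype.card {z : W // z ≠ v} = n - 1 := by
    intro v
    rw [Fintype.card_subtype_compl, Fintype.card_subtype_eq]
  have hall' : ∀ v : W, Nonempty ((lcg G v) ≃g SimpleGraph.pathGraph (n - 1)) := by
    intro v
    obtain ⟨m, ⟨ψ⟩⟩ := hall v
    have hc := Fintype.card_congr ψ.toEquiv
    rw [hcard' v, Fintype.card_fin] at hc
    exact ⟨by rw [hc]; exact ψ⟩
  have hn1 : 2 ≤ n - 1 := by omega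
  have hmin : ∀ x : W, ∃ y, G.Adj x y := exists_adj_of_connected G hconn (by omega)
  have step1 : ∀ x : W, (∃ v, v ≠ x ∧ ¬ G.Adj x v) →
      ∀ a b c, G.Adj x a → G.Adj x b → G.Adj x c → a = b ∨ a = c ∨ b = c := by
    intro x hex a b c ha hb hc
    obtain ⟨v, hvx, hnadj⟩ := hex
    by_contra hcon
    push_neg at hcon
    obtain ⟨hab, hac, hbc⟩ := hcon
    obtain ⟨φ⟩ := hall' v
    have hxv : x ≠ v := Ne.symm hvx
    have hav : a ≠ v := fun h => hnadj (h ▸ ha)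
    have hbv : b ≠ v := fun h => hnadj (h ▸ hb)
    have hcv : c ≠ v := fun h => hnadj (h ▸ hc)
    have hA : ∀ (t : W) (htv : t ≠ v), G.Adj x t →
        (lcg G v).Adj ⟨x, hxv⟩ ⟨t, htv⟩ := by
      intro t htv ht
      rw [lcg_adj]
      exact ⟨G.ne_of_adj ht, Or.inl ⟨ht, fun hco => hnadj (G.adj_symm hco.1)⟩⟩
    refine path_no_three (i := φ ⟨x, hxv⟩) (a := φ ⟨a, hav⟩) (b := φ ⟨b, hbv⟩)
      (c := φ ⟨c, hcv⟩) ?_ ?_ ?_ ?_ ?_ ?_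
    · exact fun h => hab (congrArg Subtype.val (φ.toEquiv.injective h))
    · exact fun h => hac (congrArg Subtype.val (φ.toEquiv.injective h))
    · exact fun h => hbc (congrArg Subtype.val (φ.toEquiv.injective h))
    · exact φ.map_adj_iff.mpr (hA a hav ha)
    · exact φ.map_adj_iff.mpr (hA b hbv hb)
    · exact φ.map_adj_iff.mpr (hA c hcv hc)
  by_cases huniv : ∃ h0 : W, ∀ z, z ≠ h0 → G.Adj h0 z
  · obtain ⟨h0, hh0⟩ := huniv
    by_cases huniv2 : ∃ h1, h1 ≠ h0 ∧ ∀ z, z ≠ h1 → G.Adj h1 z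
    · exfalso
      obtain ⟨h1, hne, hh1⟩ := huniv2
      obtain ⟨φ⟩ := hall' h0
      have hiso : ∀ t : {z : W // z ≠ h0}, ¬ (lcg G h0).Adj ⟨h1, hne⟩ t := by
        intro t ht
        rw [lcg_adj] at ht
        obtain ⟨htne, hx⟩ := ht
        rcases hx with ⟨hA', hN⟩ | ⟨hP, hN⟩
        · exact hN ⟨hh0 h1 hne, hh0 ↑t t.2⟩
        · exact hN (hh1 ↑t (fun hc => htne hc.symm))
      obtain ⟨j, hj⟩ := path_min_deg hn1 (φ ⟨h1, hne⟩)
      rw [← φ.apply_symm_apply j] at hj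
      exact hiso _ (φ.map_adj_iff.mp hj)
    · push_neg at huniv2
      by_cases hedge : ∃ a b : W, a ≠ h0 ∧ b ≠ h0 ∧ G.Adj a b
      · exfalso
        obtain ⟨a, b, ha, hb, hab⟩ := hedge
        have hNa : ∀ z, G.Adj a z → z = h0 ∨ z = b := by
          intro z hz
          rcases step1 a (huniv2 a ha) z h0 b hz (G.adj_symm (hh0 a ha)) hab with h | h | h
          · exact Or.inl h
          · exact Or.inr h
          · exact absurd h.symm hb
        have hNb : ∀ z, G.Adj b z → z = h0 ∨ z = a := by
          intro z hz
          rcases step1 b (huniv2 b hb) z h0 a hz (G.adj_symm (hh0 b hb)) (G.adj_symm hab)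
            with h | h | h
          · exact Or.inl h
          · exact Or.inr h
          · exact absurd h.symm ha
        obtain ⟨φ⟩ := hall' a
        have hiso : ∀ t : {z : W // z ≠ a},
            ¬ (lcg G a).Adj ⟨b, Ne.symm (G.ne_of_adj hab)⟩ t := by
          intro t ht
          rw [lcg_adj] at ht
          obtain ⟨htne, hx⟩ := ht
          by_cases hth : (t : W) = h0
          · rcases hx with ⟨hA', hN⟩ | ⟨hP, hN⟩
            · exact hN ⟨hab, by rw [hth]; exact G.adj_symm (hh0 a ha)⟩
            · exact hN (by rw [hth]; exact G.adj_symm (hh0 b hb))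
          · rcases hx with ⟨hA', -⟩ | ⟨⟨hP1, hP2⟩, -⟩
            · rcases hNb ↑t hA' with h | h
              · exact hth h
              · exact t.2 h
            · rcases hNa ↑t hP2 with h | h
              · exact hth h
              · exact htne h.symm
        obtain ⟨j, hj⟩ := path_min_deg hn1 (φ ⟨b, Ne.symm (G.ne_of_adj hab)⟩)
        rw [← φ.apply_symm_apply j] at hj
        exact hiso _ (φ.map_adj_iff.mp hj)
      · push_neg at hedge
        by_cases hc3 : Fintype.card W = 3
        · exact star_card3_path G hc3 h0 hh0 hedge
        · exfalso
          obtain ⟨φ⟩ := hall' h0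
          obtain ⟨i, j, hij, hnadj⟩ := path_nonadj (m := n - 1) (by omega)
          have hadj' : (lcg G h0).Adj (φ.symm i) (φ.symm j) := by
            rw [lcg_adj]
            refine ⟨fun hc => hij ?_, Or.inr ⟨⟨hh0 _ (φ.symm i).2, hh0 _ (φ.symm j).2⟩,
              hedge _ _ (φ.symm i).2 (φ.symm j).2⟩⟩
            have h1 : φ.symm i = φ.symm j := Subtype.ext hc
            calc i = φ (φ.symm i) := (φ.apply_symm_apply i).symm
              _ = φ (φ.symm j) := by rw [h1]
              _ = j := φ.apply_symm_apply j
          have hadj2 := φ.map_adj_iff.mpr hadj'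
          rw [φ.apply_symm_apply, φ.apply_symm_apply] at hadj2
          exact hnadj hadj2
  · push_neg at huniv
    have step1' : ∀ x a b c, G.Adj x a → G.Adj x b → G.Adj x c →
        a = b ∨ a = c ∨ b = c := fun x => step1 x (huniv x)
    by_cases hleaf : ∃ u w, G.Adj u w ∧ ∀ z, G.Adj u z → z = w
    · obtain ⟨u, w, huw, hl⟩ := hleaf
      obtain ⟨φ⟩ := hall' u
      exact leaf_extend G u w huw hl (step1' w) (n - 1) hn1 φ
    · exfalso
      push_neg at hleaf
      have htwo : ∀ x, ∃ y z : W, y ≠ z ∧ G.Adj x y ∧ G.Adj x z := by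
        intro x
        obtain ⟨y, hy⟩ := hmin x
        obtain ⟨z, hz, hzy⟩ := hleaf x y hy
        exact ⟨y, z, fun h => hzy h.symm, hy, hz⟩
      have hdpar : ∀ x, dpar G x = 0 := by
        intro x
        obtain ⟨y, z, hyz, hy, hz⟩ := htwo x
        have hfil : Finset.univ.filter (fun t => G.Adj x t) = {y, z} := by
          ext t
          simp only [Finset.mem_filter, Finset.mem_univ, true_and, Finset.mem_insert,
            Finset.mem_singleton]
          constructor
          · intro ht
            rcases step1' x t y z ht hy hz with h | h | h
            · exact Or.inl h
            · exact Or.inr h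
            · exact absurd h hyz
          · rintro (rfl | rfl)
            · exact hy
            · exact hz
        rw [dpar, Finset.sum_boole, hfil]
        rw [Finset.card_insert_of_notMem (by simp [hyz]), Finset.card_singleton]
        decide
      have hnemp : Nonempty W := Fintype.card_pos_iff.mp (by omega)
      obtain ⟨v⟩ := hnemp
      obtain ⟨φ⟩ := hall' v
      obtain ⟨i, hi⟩ := path_endpoint_parity (m := n - 1) (by omega)
      have hpar := iso_parity φ (φ.symm i)
      rw [φ.apply_symm_apply, hi] at hpar
      rw [lcg_parity_zero G hdpar v (φ.symm i)] at hpar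
      exact zero_ne_one hpar

theorem keyGoodPair : ∀ (n : ℕ) {W : Type u} [Fintype W] [DecidableEq W]
    (G : SimpleGraph W), Fintype.card W = n → 2 ≤ n →
    (¬ ∃ m, Nonempty (G ≃g SimpleGraph.pathGraph m)) → HasGoodPair G := by
  intro n
  induction n using Nat.strong_induction_on with
  | _ n IH =>
    intro W _ _ G hcard h2 hnp
    classical
    by_cases hconn : G.Connected
    · by_cases hn3 : 3 ≤ n
      · by_cases hex : ∃ v : W, ¬ (∃ m, Nonempty ((lcg G v) ≃g SimpleGraph.pathGraph m))
        · obtain ⟨v, hv⟩ := hex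
          have hcV : Fintype.card {z : W // z ≠ v} = n - 1 := by
            rw [Fintype.card_subtype_compl, Fintype.card_subtype_eq, hcard]
          exact lift_goodPair G v (IH (n - 1) (by omega) (lcg G v) hcV (by omega) hv)
        · push_neg at hex
          exact absurd (allpaths_path G hconn (by omega) hex) hnp
      · have hn2 : Fintype.card W = 2 := by omega
        exact absurd (conn_card2_path G hconn hn2) hnp
    · have hnemp : Nonempty W := Fintype.card_pos_iff.mp (by omega)
      have hdisc : ∃ a b : W, ¬ G.Reachable a b := by
        by_contra hcon
        push_neg at hcon
        exact hconn ((SimpleGraph.connected_iff G).mpr ⟨fun a b => hcon a b, hnemp⟩)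
      obtain ⟨a, b, hab⟩ := hdisc
      exact disconnected_goodPair G a b hab

end Aux

/-- If `G` is a finite simple graph on at least two vertices that is not a path
(not isomorphic to any path graph `P_n`), then there is a mark set `S` such that
the adjacency matrix over GF(2) of the graft `(G, S)` has corank at least `2`,
i.e. its rank is at most `|V(G)| - 2`. -/
theorem exists_markSet_rank_le {V : Type*} [Fintype V] [DecidableEq V]
    (G : SimpleGraph V) (hcard : 2 ≤ Fintype.card V)
    (hnp : ¬ ∃ n, Nonempty (G ≃g SimpleGraph.pathGraph n)) :
    ∃ S : Finset V,
      (Graft.mk Finset.univ G (fun u _ _ => Finset.mem_univ u) S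
        (Finset.subset_univ S)).matrix.rank ≤ Fintype.card V - 2 := by
  classical
  obtain ⟨S, x, y, hx, hy, a, b, hxa, hya, hxb, hyb⟩ :=
    keyGoodPair (Fintype.card V) G rfl hcard hnp
  refine ⟨S, ?_⟩
  set Γ : Graft V := Graft.mk Finset.univ G (fun u _ _ => Finset.mem_univ u) S
    (Finset.subset_univ S) with hG
  have hent : ∀ i j : (Finset.univ : Finset V), Γ.matrix i j = entGS G S (↑i) (↑j) := by
    intro i j; rfl
  let e : ((Finset.univ : Finset V) : Type _) ≃ V :=
    Equiv.subtypeUnivEquiv (fun v => Finset.mem_univ v)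
  have hker : ∀ z : V → ZMod 2, (∀ v, ∑ u, entGS G S v u * z u = 0) →
      Γ.matrix.mulVecLin (fun i => z ↑i) = 0 := by
    intro z hz
    funext i
    rw [Matrix.mulVecLin_apply]
    show ∑ j, Γ.matrix i j * z ↑j = 0
    calc ∑ j : ((Finset.univ : Finset V) : Type _), Γ.matrix i j * z ↑j
        = ∑ u : V, entGS G S (↑i) u * z u := by
          rw [← Equiv.sum_comp e (fun u => entGS G S (↑i) u * z u)]
          exact Finset.sum_congr rfl (fun j _ => rfl)
      _ = 0 := hz ↑i
  set K := LinearMap.ker (Γ.matrix.mulVecLin) with hK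
  have hxK : _ ∈ K := LinearMap.mem_ker.mpr (hker x hx)
  have hyK : _ ∈ K := LinearMap.mem_ker.mpr (hker y hy)
  have hli : LinearIndependent (ZMod 2) ![(⟨_, hxK⟩ : K), (⟨_, hyK⟩ : K)] := by
    rw [LinearIndependent.pair_iff]
    intro s t hst
    have h1 := congrArg Subtype.val hst
    have h2 := congrFun h1 ⟨a, Finset.mem_univ a⟩
    have h3 := congrFun h1 ⟨b, Finset.mem_univ b⟩
    simp only [Submodule.coe_add, SetLike.val_smul, Pi.zero_apply, ZeroMemClass.coe_zero] at h2 h3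
    simp only [Pi.add_apply, Pi.smul_apply, smul_eq_mul, Pi.zero_apply] at h2 h3
    rw [hxa, hya] at h2
    rw [hxb, hyb] at h3
    constructor
    · simpa using h2
    · simpa using h3
  have h2le : 2 ≤ Module.finrank (ZMod 2) K := by
    simpa using hli.fintype_card_le_finrank
  have hrn : Γ.matrix.rank + Module.finrank (ZMod 2) K =
      Fintype.card ((Finset.univ : Finset V) : Type _) := by
    rw [Matrix.rank, hK]
    rw [LinearMap.finrank_range_add_finrank_ker]
    rw [Module.finrank_fintype_fun_eq_card]
  rw [Fintype.card_coe, Finset.card_univ] at hrn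
  omega
end
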